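/- Let L be any fragment of ATL(Prop) and let 𝒫, 𝒩 be finite sets of concurrent game structures over Prop. If there is a (𝒫,𝒩)-separating L-formula, then there is one of size at most 2^n, where n := Σ_{C ∈ 𝒫∪𝒩} |Q_C|. -/

import Mathlib

open scoped Classical

/-- A concurrent game structure over `Prop`: a finite non-empty set of states,
initial states, `k ≥ 1` agents, a labelling, for each state and agent the number
`d q a ≥ 1` of available actions (actions are numbered `1, …, d q a`), and a
transition function mapping a state and a tuple of one action per agent to the
successor state. -/
structure CGS (P : Type) where
  Q : Type
  [finQ : Fintype Q]
  neQ : Nonempty Q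
  I : Set Q
  k : ℕ
  hk : 1 ≤ k
  π : Q → Set P
  d : Q → Fin k → ℕ
  hd : ∀ q a, 1 ≤ d q a
  δ : Q → (Fin k → ℕ) → Q

attribute [instance] CGS.finQ

/-- A strategy for agent `a`: on every non-empty history it prescribes an action
available to `a` at the last state of the history. -/
def IsStrategy {P : Type} (C : CGS P) (a : Fin C.k) (s : List C.Q → ℕ) : Prop :=
  ∀ (l : List C.Q) (hl : l ≠ []), 1 ≤ s l ∧ s l ≤ C.d (l.getLast hl) a

/-- The history `ρ[0]⋯ρ[i]` of a play. -/
def hist {Q : Type} (ρ : ℕ → Q) (i : ℕ) : List Q := (List.range (i + 1)).map ρ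

/-- `ρ` is an outcome from `q` compatible with the strategies `s a` of the agents
`a` of the coalition `A` (agents are numbered `1, …, k`): at every step, the next
state is obtained by a valid tuple of actions whose components for coalition
members are prescribed by their strategies. -/
def Outcome {P : Type} (C : CGS P) (A : Finset ℕ) (s : Fin C.k → List C.Q → ℕ)
    (q : C.Q) (ρ : ℕ → C.Q) : Prop :=
  ρ 0 = q ∧ ∀ i : ℕ, ∃ β : Fin C.k → ℕ,
    (∀ a : Fin C.k, 1 ≤ β a ∧ β a ≤ C.d (ρ i) a) ∧
    (∀ a : Fin C.k, (a.val + 1) ∈ A → β a = s a (hist ρ i)) ∧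
    ρ (i + 1) = C.δ (ρ i) β

/-- Formulas of alternating-time temporal logic `ATL(Prop)`:
`φ ::= p | ¬φ | φ∨φ | φ∧φ | ⟨⟨A⟩⟩Xφ | ⟨⟨A⟩⟩Fφ | ⟨⟨A⟩⟩Gφ | ⟨⟨A⟩⟩(φUφ)`,
where `A` is a finite set of agent indices. -/
inductive ATL (P : Type) : Type
  | atom : P → ATL P
  | not : ATL P → ATL P
  | or : ATL P → ATL P → ATL P
  | and : ATL P → ATL P → ATL P
  | cnext : Finset ℕ → ATL P → ATL P
  | cfut : Finset ℕ → ATL P → ATL P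
  | cglob : Finset ℕ → ATL P → ATL P
  | cuntil : Finset ℕ → ATL P → ATL P → ATL P

/-- Satisfaction of an `ATL` formula at a state of a concurrent game structure. -/
def ATLsat {P : Type} (C : CGS P) : ATL P → C.Q → Prop
  | .atom p, q => p ∈ C.π q
  | .not φ, q => ¬ ATLsat C φ q
  | .or φ ψ, q => ATLsat C φ q ∨ ATLsat C ψ q
  | .and φ ψ, q => ATLsat C φ q ∧ ATLsat C ψ q
  | .cnext A φ, q => ∃ s : Fin C.k → List C.Q → ℕ,
      (∀ a : Fin C.k, (a.val + 1) ∈ A → IsStrategy C a (s a)) ∧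
      ∀ ρ : ℕ → C.Q, Outcome C A s q ρ → ATLsat C φ (ρ 1)
  | .cfut A φ, q => ∃ s : Fin C.k → List C.Q → ℕ,
      (∀ a : Fin C.k, (a.val + 1) ∈ A → IsStrategy C a (s a)) ∧
      ∀ ρ : ℕ → C.Q, Outcome C A s q ρ → ∃ i, ATLsat C φ (ρ i)
  | .cglob A φ, q => ∃ s : Fin C.k → List C.Q → ℕ,
      (∀ a : Fin C.k, (a.val + 1) ∈ A → IsStrategy C a (s a)) ∧
      ∀ ρ : ℕ → C.Q, Outcome C A s q ρ → ∀ i, ATLsat C φ (ρ i)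
  | .cuntil A φ ψ, q => ∃ s : Fin C.k → List C.Q → ℕ,
      (∀ a : Fin C.k, (a.val + 1) ∈ A → IsStrategy C a (s a)) ∧
      ∀ ρ : ℕ → C.Q, Outcome C A s q ρ →
        ∃ i, ATLsat C ψ (ρ i) ∧ ∀ j < i, ATLsat C φ (ρ j)

/-- `C ⊨ φ`: every initial state satisfies `φ`. -/
def ATLsatC {P : Type} (C : CGS P) (φ : ATL P) : Prop :=
  ∀ q ∈ C.I, ATLsat C φ q

/-- A fragment of `ATL(Prop)`: a subset of its operators (atomic propositions,
`¬`, `∨`, `∧`, and for each temporal operator the set of allowed coalitions). -/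
structure ATLFragment (P : Type) where
  atoms : Set P
  hasNot : Prop
  hasOr : Prop
  hasAnd : Prop
  nextC : Set (Finset ℕ)
  futC : Set (Finset ℕ)
  globC : Set (Finset ℕ)
  untilC : Set (Finset ℕ)

/-- A formula belongs to the fragment if it is built using only its operators. -/
def ATLFragment.Mem {P : Type} (F : ATLFragment P) : ATL P → Prop
  | .atom p => p ∈ F.atoms
  | .not φ => F.hasNot ∧ F.Mem φ
  | .or φ ψ => F.hasOr ∧ F.Mem φ ∧ F.Mem ψ
  | .and φ ψ => F.hasAnd ∧ F.Mem φ ∧ F.Mem ψ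
  | .cnext A φ => A ∈ F.nextC ∧ F.Mem φ
  | .cfut A φ => A ∈ F.futC ∧ F.Mem φ
  | .cglob A φ => A ∈ F.globC ∧ F.Mem φ
  | .cuntil A φ ψ => A ∈ F.untilC ∧ F.Mem φ ∧ F.Mem ψ

/-- The set of subformulas of an `ATL` formula. -/
def ATLSub {P : Type} : ATL P → Set (ATL P)
  | .atom p => {.atom p}
  | .not φ => insert (.not φ) (ATLSub φ)
  | .or φ ψ => insert (.or φ ψ) (ATLSub φ ∪ ATLSub ψ)
  | .and φ ψ => insert (.and φ ψ) (ATLSub φ ∪ ATLSub ψ)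
  | .cnext A φ => insert (.cnext A φ) (ATLSub φ)
  | .cfut A φ => insert (.cfut A φ) (ATLSub φ)
  | .cglob A φ => insert (.cglob A φ) (ATLSub φ)
  | .cuntil A φ ψ => insert (.cuntil A φ ψ) (ATLSub φ ∪ ATLSub ψ)

/-- The (syntax-DAG) size of an `ATL` formula: its number of distinct subformulas. -/
noncomputable def ATLsz {P : Type} (φ : ATL P) : ℕ := (ATLSub φ).ncard
namespace ATLproofAux

variable {P : Type}

lemma self_mem_sub (φ : ATL P) : φ ∈ ATLSub φ := by
  cases φ <;> simp [ATLSub]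

lemma sub_finite (φ : ATL P) : (ATLSub φ).Finite := by
  induction φ with
  | atom p => simp [ATLSub]
  | not φ ih => exact (ih.insert _)
  | or φ ψ ih1 ih2 => exact ((ih1.union ih2).insert _)
  | and φ ψ ih1 ih2 => exact ((ih1.union ih2).insert _)
  | cnext A φ ih => exact (ih.insert _)
  | cfut A φ ih => exact (ih.insert _)
  | cglob A φ ih => exact (ih.insert _)
  | cuntil A φ ψ ih1 ih2 => exact ((ih1.union ih2).insert _)

/-- plain tree size -/
def len : ATL P → ℕ
  | .atom _ => 1
  | .not φ => len φ + 1
  | .or φ ψ => len φ + len ψ + 1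
  | .and φ ψ => len φ + len ψ + 1
  | .cnext _ φ => len φ + 1
  | .cfut _ φ => len φ + 1
  | .cglob _ φ => len φ + 1
  | .cuntil _ φ ψ => len φ + len ψ + 1

lemma len_lt_of_mem : ∀ {φ σ : ATL P}, σ ∈ ATLSub φ → σ = φ ∨ len σ < len φ := by
  intro φ
  induction φ with
  | atom p => intro σ h; simp [ATLSub] at h; exact Or.inl h
  | not φ ih =>
      intro σ h; simp only [ATLSub, Set.mem_insert_iff] at h
      rcases h with h | h
      · exact Or.inl h
      · rcases ih h with rfl | h' <;> right <;> simp [len] <;> omega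
  | or φ ψ ih1 ih2 =>
      intro σ h; simp only [ATLSub, Set.mem_insert_iff, Set.mem_union] at h
      rcases h with h | h | h
      · exact Or.inl h
      · rcases ih1 h with rfl | h' <;> right <;> simp [len] <;> omega
      · rcases ih2 h with rfl | h' <;> right <;> simp [len] <;> omega
  | and φ ψ ih1 ih2 =>
      intro σ h; simp only [ATLSub, Set.mem_insert_iff, Set.mem_union] at h
      rcases h with h | h | h
      · exact Or.inl h
      · rcases ih1 h with rfl | h' <;> right <;> simp [len] <;> omega
      · rcases ih2 h with rfl | h' <;> right <;> simp [len] <;> omega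
  | cnext A φ ih =>
      intro σ h; simp only [ATLSub, Set.mem_insert_iff] at h
      rcases h with h | h
      · exact Or.inl h
      · rcases ih h with rfl | h' <;> right <;> simp [len] <;> omega
  | cfut A φ ih =>
      intro σ h; simp only [ATLSub, Set.mem_insert_iff] at h
      rcases h with h | h
      · exact Or.inl h
      · rcases ih h with rfl | h' <;> right <;> simp [len] <;> omega
  | cglob A φ ih =>
      intro σ h; simp only [ATLSub, Set.mem_insert_iff] at h
      rcases h with h | h
      · exact Or.inl h
      · rcases ih h with rfl | h' <;> right <;> simp [len] <;> omega
  | cuntil A φ ψ ih1 ih2 =>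
      intro σ h; simp only [ATLSub, Set.mem_insert_iff, Set.mem_union] at h
      rcases h with h | h | h
      · exact Or.inl h
      · rcases ih1 h with rfl | h' <;> right <;> simp [len] <;> omega
      · rcases ih2 h with rfl | h' <;> right <;> simp [len] <;> omega

lemma sub_antisymm {σ τ : ATL P} (h1 : σ ∈ ATLSub τ) (h2 : τ ∈ ATLSub σ) : σ = τ := by
  rcases len_lt_of_mem h1 with h | h
  · exact h
  · rcases len_lt_of_mem h2 with h' | h'
    · exact h'.symm
    · omega

lemma sub_trans : ∀ {φ σ τ : ATL P}, σ ∈ ATLSub τ → τ ∈ ATLSub φ → σ ∈ ATLSub φ := by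
  intro φ
  induction φ with
  | atom p =>
      intro σ τ h1 h2; simp [ATLSub] at h2 ⊢; subst h2; simpa [ATLSub] using h1
  | not φ ih =>
      intro σ τ h1 h2; simp only [ATLSub, Set.mem_insert_iff] at h2 ⊢
      rcases h2 with rfl | h2
      · simpa [ATLSub] using h1
      · exact Or.inr (ih h1 h2)
  | or φ ψ ih1 ih2 =>
      intro σ τ h1 h2; simp only [ATLSub, Set.mem_insert_iff, Set.mem_union] at h2 ⊢
      rcases h2 with rfl | h2 | h2
      · simpa [ATLSub] using h1
      · exact Or.inr (Or.inl (ih1 h1 h2))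
      · exact Or.inr (Or.inr (ih2 h1 h2))
  | and φ ψ ih1 ih2 =>
      intro σ τ h1 h2; simp only [ATLSub, Set.mem_insert_iff, Set.mem_union] at h2 ⊢
      rcases h2 with rfl | h2 | h2
      · simpa [ATLSub] using h1
      · exact Or.inr (Or.inl (ih1 h1 h2))
      · exact Or.inr (Or.inr (ih2 h1 h2))
  | cnext A φ ih =>
      intro σ τ h1 h2; simp only [ATLSub, Set.mem_insert_iff] at h2 ⊢
      rcases h2 with rfl | h2
      · simpa [ATLSub] using h1
      · exact Or.inr (ih h1 h2)
  | cfut A φ ih =>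
      intro σ τ h1 h2; simp only [ATLSub, Set.mem_insert_iff] at h2 ⊢
      rcases h2 with rfl | h2
      · simpa [ATLSub] using h1
      · exact Or.inr (ih h1 h2)
  | cglob A φ ih =>
      intro σ τ h1 h2; simp only [ATLSub, Set.mem_insert_iff] at h2 ⊢
      rcases h2 with rfl | h2
      · simpa [ATLSub] using h1
      · exact Or.inr (ih h1 h2)
  | cuntil A φ ψ ih1 ih2 =>
      intro σ τ h1 h2; simp only [ATLSub, Set.mem_insert_iff, Set.mem_union] at h2 ⊢
      rcases h2 with rfl | h2 | h2
      · simpa [ATLSub] using h1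
      · exact Or.inr (Or.inl (ih1 h1 h2))
      · exact Or.inr (Or.inr (ih2 h1 h2))

/-- substitution of `τ` for `σ` -/
noncomputable def subst (σ τ : ATL P) : ATL P → ATL P
  | .atom p => if ATL.atom p = σ then τ else .atom p
  | .not φ => if ATL.not φ = σ then τ else .not (subst σ τ φ)
  | .or φ ψ => if ATL.or φ ψ = σ then τ else .or (subst σ τ φ) (subst σ τ ψ)
  | .and φ ψ => if ATL.and φ ψ = σ then τ else .and (subst σ τ φ) (subst σ τ ψ)
  | .cnext A φ => if ATL.cnext A φ = σ then τ else .cnext A (subst σ τ φ)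
  | .cfut A φ => if ATL.cfut A φ = σ then τ else .cfut A (subst σ τ φ)
  | .cglob A φ => if ATL.cglob A φ = σ then τ else .cglob A (subst σ τ φ)
  | .cuntil A φ ψ => if ATL.cuntil A φ ψ = σ then τ
      else .cuntil A (subst σ τ φ) (subst σ τ ψ)

lemma subst_self (σ τ : ATL P) : subst σ τ σ = τ := by
  cases σ <;> simp [subst]

lemma subst_of_not_mem : ∀ {φ σ : ATL P} (τ : ATL P), σ ∉ ATLSub φ → subst σ τ φ = φ := by
  intro φ
  induction φ with
  | atom p => intro σ τ h; simp [ATLSub] at h; simp [subst, Ne.symm h]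
  | not φ ih =>
      intro σ τ h; simp only [ATLSub, Set.mem_insert_iff, not_or] at h
      simp [subst, Ne.symm h.1, ih τ h.2]
  | or φ ψ ih1 ih2 =>
      intro σ τ h; simp only [ATLSub, Set.mem_insert_iff, Set.mem_union, not_or] at h
      simp [subst, Ne.symm h.1, ih1 τ h.2.1, ih2 τ h.2.2]
  | and φ ψ ih1 ih2 =>
      intro σ τ h; simp only [ATLSub, Set.mem_insert_iff, Set.mem_union, not_or] at h
      simp [subst, Ne.symm h.1, ih1 τ h.2.1, ih2 τ h.2.2]
  | cnext A φ ih =>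
      intro σ τ h; simp only [ATLSub, Set.mem_insert_iff, not_or] at h
      simp [subst, Ne.symm h.1, ih τ h.2]
  | cfut A φ ih =>
      intro σ τ h; simp only [ATLSub, Set.mem_insert_iff, not_or] at h
      simp [subst, Ne.symm h.1, ih τ h.2]
  | cglob A φ ih =>
      intro σ τ h; simp only [ATLSub, Set.mem_insert_iff, not_or] at h
      simp [subst, Ne.symm h.1, ih τ h.2]
  | cuntil A φ ψ ih1 ih2 =>
      intro σ τ h; simp only [ATLSub, Set.mem_insert_iff, Set.mem_union, not_or] at h
      simp [subst, Ne.symm h.1, ih1 τ h.2.1, ih2 τ h.2.2]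

end ATLproofAux
namespace ATLproofAux

variable {P : Type}

lemma sub_subst_subset (σ τ : ATL P) :
    ∀ φ : ATL P, ATLSub (subst σ τ φ) ⊆ (subst σ τ) '' ATLSub φ ∪ ATLSub τ := by
  have hins : ∀ (φ : ATL P) (S : Set (ATL P)), ATLSub φ ⊆ S →
      (subst σ τ) '' ATLSub φ ∪ ATLSub τ ⊆ (subst σ τ) '' S ∪ ATLSub τ := by
    intro φ S hS
    exact Set.union_subset_union_left _ (Set.image_mono hS)
  intro φ
  induction φ with
  | atom p =>
      by_cases h : ATL.atom p = σ
      · subst h; rw [subst_self]; exact Set.subset_union_right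
      · rw [show subst σ τ (ATL.atom p) = ATL.atom p by simp [subst, h]]
        intro x hx
        simp only [ATLSub, Set.mem_singleton_iff] at hx; subst hx
        exact Or.inl ⟨ATL.atom p, self_mem_sub _, by simp [subst, h]⟩
  | not φ ih =>
      by_cases h : ATL.not φ = σ
      · subst h; rw [subst_self]; exact Set.subset_union_right
      · rw [show subst σ τ (ATL.not φ) = ATL.not (subst σ τ φ) by simp [subst, h]]
        intro x hx
        rcases hx with rfl | hx
        · exact Or.inl ⟨ATL.not φ, self_mem_sub _, by simp [subst, h]⟩
        · exact hins φ _ (by intro y hy; exact Set.mem_insert_of_mem _ hy) (ih hx)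
  | or φ ψ ih1 ih2 =>
      by_cases h : ATL.or φ ψ = σ
      · subst h; rw [subst_self]; exact Set.subset_union_right
      · rw [show subst σ τ (ATL.or φ ψ) = ATL.or (subst σ τ φ) (subst σ τ ψ) by simp [subst, h]]
        intro x hx
        rcases hx with rfl | hx | hx
        · exact Or.inl ⟨ATL.or φ ψ, self_mem_sub _, by simp [subst, h]⟩
        · exact hins φ _ (by intro y hy; exact Set.mem_insert_of_mem _ (Or.inl hy)) (ih1 hx)
        · exact hins ψ _ (by intro y hy; exact Set.mem_insert_of_mem _ (Or.inr hy)) (ih2 hx)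
  | and φ ψ ih1 ih2 =>
      by_cases h : ATL.and φ ψ = σ
      · subst h; rw [subst_self]; exact Set.subset_union_right
      · rw [show subst σ τ (ATL.and φ ψ) = ATL.and (subst σ τ φ) (subst σ τ ψ) by simp [subst, h]]
        intro x hx
        rcases hx with rfl | hx | hx
        · exact Or.inl ⟨ATL.and φ ψ, self_mem_sub _, by simp [subst, h]⟩
        · exact hins φ _ (by intro y hy; exact Set.mem_insert_of_mem _ (Or.inl hy)) (ih1 hx)
        · exact hins ψ _ (by intro y hy; exact Set.mem_insert_of_mem _ (Or.inr hy)) (ih2 hx)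
  | cnext A φ ih =>
      by_cases h : ATL.cnext A φ = σ
      · subst h; rw [subst_self]; exact Set.subset_union_right
      · rw [show subst σ τ (ATL.cnext A φ) = ATL.cnext A (subst σ τ φ) by simp [subst, h]]
        intro x hx
        rcases hx with rfl | hx
        · exact Or.inl ⟨ATL.cnext A φ, self_mem_sub _, by simp [subst, h]⟩
        · exact hins φ _ (by intro y hy; exact Set.mem_insert_of_mem _ hy) (ih hx)
  | cfut A φ ih =>
      by_cases h : ATL.cfut A φ = σ
      · subst h; rw [subst_self]; exact Set.subset_union_right
      · rw [show subst σ τ (ATL.cfut A φ) = ATL.cfut A (subst σ τ φ) by simp [subst, h]]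
        intro x hx
        rcases hx with rfl | hx
        · exact Or.inl ⟨ATL.cfut A φ, self_mem_sub _, by simp [subst, h]⟩
        · exact hins φ _ (by intro y hy; exact Set.mem_insert_of_mem _ hy) (ih hx)
  | cglob A φ ih =>
      by_cases h : ATL.cglob A φ = σ
      · subst h; rw [subst_self]; exact Set.subset_union_right
      · rw [show subst σ τ (ATL.cglob A φ) = ATL.cglob A (subst σ τ φ) by simp [subst, h]]
        intro x hx
        rcases hx with rfl | hx
        · exact Or.inl ⟨ATL.cglob A φ, self_mem_sub _, by simp [subst, h]⟩
        · exact hins φ _ (by intro y hy; exact Set.mem_insert_of_mem _ hy) (ih hx)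
  | cuntil A φ ψ ih1 ih2 =>
      by_cases h : ATL.cuntil A φ ψ = σ
      · subst h; rw [subst_self]; exact Set.subset_union_right
      · rw [show subst σ τ (ATL.cuntil A φ ψ) = ATL.cuntil A (subst σ τ φ) (subst σ τ ψ) by
          simp [subst, h]]
        intro x hx
        rcases hx with rfl | hx | hx
        · exact Or.inl ⟨ATL.cuntil A φ ψ, self_mem_sub _, by simp [subst, h]⟩
        · exact hins φ _ (by intro y hy; exact Set.mem_insert_of_mem _ (Or.inl hy)) (ih1 hx)
        · exact hins ψ _ (by intro y hy; exact Set.mem_insert_of_mem _ (Or.inr hy)) (ih2 hx)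

end ATLproofAux
namespace ATLproofAux

variable {P : Type}

lemma sat_subst (C : CGS P) {σ τ : ATL P}
    (heq : ∀ q : C.Q, ATLsat C σ q ↔ ATLsat C τ q) :
    ∀ (φ : ATL P) (q : C.Q), ATLsat C (subst σ τ φ) q ↔ ATLsat C φ q := by
  intro φ
  induction φ with
  | atom p =>
      intro q
      by_cases h : ATL.atom p = σ
      · rw [h, subst_self]; exact (heq q).symm
      · simp [subst, h]
  | not φ ih =>
      intro q
      by_cases h : ATL.not φ = σ
      · rw [h, subst_self]; exact (heq q).symm
      · simp only [subst, if_neg h, ATLsat, ih]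
  | or φ ψ ih1 ih2 =>
      intro q
      by_cases h : ATL.or φ ψ = σ
      · rw [h, subst_self]; exact (heq q).symm
      · simp only [subst, if_neg h, ATLsat, ih1, ih2]
  | and φ ψ ih1 ih2 =>
      intro q
      by_cases h : ATL.and φ ψ = σ
      · rw [h, subst_self]; exact (heq q).symm
      · simp only [subst, if_neg h, ATLsat, ih1, ih2]
  | cnext A φ ih =>
      intro q
      by_cases h : ATL.cnext A φ = σ
      · rw [h, subst_self]; exact (heq q).symm
      · simp only [subst, if_neg h, ATLsat, ih]
  | cfut A φ ih =>
      intro q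
      by_cases h : ATL.cfut A φ = σ
      · rw [h, subst_self]; exact (heq q).symm
      · simp only [subst, if_neg h, ATLsat, ih]
  | cglob A φ ih =>
      intro q
      by_cases h : ATL.cglob A φ = σ
      · rw [h, subst_self]; exact (heq q).symm
      · simp only [subst, if_neg h, ATLsat, ih]
  | cuntil A φ ψ ih1 ih2 =>
      intro q
      by_cases h : ATL.cuntil A φ ψ = σ
      · rw [h, subst_self]; exact (heq q).symm
      · simp only [subst, if_neg h, ATLsat, ih1, ih2]

lemma mem_of_sub {F : ATLFragment P} :
    ∀ {φ ψ : ATL P}, F.Mem φ → ψ ∈ ATLSub φ → F.Mem ψ := by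
  intro φ
  induction φ with
  | atom p => intro ψ hm h; simp [ATLSub] at h; subst h; exact hm
  | not φ ih =>
      intro ψ hm h
      rcases h with rfl | h
      · exact hm
      · exact ih hm.2 h
  | or φ ψ' ih1 ih2 =>
      intro ψ hm h
      rcases h with rfl | h | h
      · exact hm
      · exact ih1 hm.2.1 h
      · exact ih2 hm.2.2 h
  | and φ ψ' ih1 ih2 =>
      intro ψ hm h
      rcases h with rfl | h | h
      · exact hm
      · exact ih1 hm.2.1 h
      · exact ih2 hm.2.2 h
  | cnext A φ ih =>
      intro ψ hm h
      rcases h with rfl | h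
      · exact hm
      · exact ih hm.2 h
  | cfut A φ ih =>
      intro ψ hm h
      rcases h with rfl | h
      · exact hm
      · exact ih hm.2 h
  | cglob A φ ih =>
      intro ψ hm h
      rcases h with rfl | h
      · exact hm
      · exact ih hm.2 h
  | cuntil A φ ψ' ih1 ih2 =>
      intro ψ hm h
      rcases h with rfl | h | h
      · exact hm
      · exact ih1 hm.2.1 h
      · exact ih2 hm.2.2 h

lemma mem_subst {F : ATLFragment P} {σ τ : ATL P} (hτ : F.Mem τ) :
    ∀ {φ : ATL P}, F.Mem φ → F.Mem (subst σ τ φ) := by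
  intro φ
  induction φ with
  | atom p =>
      intro hm
      by_cases h : ATL.atom p = σ
      · rw [h, subst_self]; exact hτ
      · simpa [subst, h] using hm
  | not φ ih =>
      intro hm
      by_cases h : ATL.not φ = σ
      · rw [h, subst_self]; exact hτ
      · exact show F.Mem (if _ then _ else _) by
          rw [if_neg h]; exact ⟨hm.1, ih hm.2⟩
  | or φ ψ ih1 ih2 =>
      intro hm
      by_cases h : ATL.or φ ψ = σ
      · rw [h, subst_self]; exact hτ
      · exact show F.Mem (if _ then _ else _) by
          rw [if_neg h]; exact ⟨hm.1, ih1 hm.2.1, ih2 hm.2.2⟩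
  | and φ ψ ih1 ih2 =>
      intro hm
      by_cases h : ATL.and φ ψ = σ
      · rw [h, subst_self]; exact hτ
      · exact show F.Mem (if _ then _ else _) by
          rw [if_neg h]; exact ⟨hm.1, ih1 hm.2.1, ih2 hm.2.2⟩
  | cnext A φ ih =>
      intro hm
      by_cases h : ATL.cnext A φ = σ
      · rw [h, subst_self]; exact hτ
      · exact show F.Mem (if _ then _ else _) by
          rw [if_neg h]; exact ⟨hm.1, ih hm.2⟩
  | cfut A φ ih =>
      intro hm
      by_cases h : ATL.cfut A φ = σ
      · rw [h, subst_self]; exact hτ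
      · exact show F.Mem (if _ then _ else _) by
          rw [if_neg h]; exact ⟨hm.1, ih hm.2⟩
  | cglob A φ ih =>
      intro hm
      by_cases h : ATL.cglob A φ = σ
      · rw [h, subst_self]; exact hτ
      · exact show F.Mem (if _ then _ else _) by
          rw [if_neg h]; exact ⟨hm.1, ih hm.2⟩
  | cuntil A φ ψ ih1 ih2 =>
      intro hm
      by_cases h : ATL.cuntil A φ ψ = σ
      · rw [h, subst_self]; exact hτ
      · exact show F.Mem (if _ then _ else _) by
          rw [if_neg h]; exact ⟨hm.1, ih1 hm.2.1, ih2 hm.2.2⟩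

/-- The key size lemma: substituting a subformula `σ` by another subformula `τ`
not containing `σ` strictly decreases the number of distinct subformulas. -/
lemma sz_subst_lt {φ σ τ : ATL P} (hσ : σ ∈ ATLSub φ) (hτ : τ ∈ ATLSub φ)
    (hne : σ ≠ τ) (hστ : σ ∉ ATLSub τ) : ATLsz (subst σ τ φ) < ATLsz φ := by
  have hfin := sub_finite φ
  -- τ's subformulas are fixed by the substitution
  have hfix : ∀ ψ ∈ ATLSub τ, subst σ τ ψ = ψ := by
    intro ψ hψ
    refine subst_of_not_mem τ fun hc => hστ (sub_trans hc hψ)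
  have hτsub : ATLSub τ ⊆ ATLSub φ := fun x hx => sub_trans hx hτ
  have hsub : ATLSub (subst σ τ φ) ⊆ (subst σ τ) '' (ATLSub φ \ {σ}) := by
    intro x hx
    rcases sub_subst_subset σ τ φ hx with hx | hx
    · rcases hx with ⟨y, hy, rfl⟩
      by_cases hyσ : y = σ
      · subst hyσ
        exact ⟨τ, ⟨hτ, hne.symm⟩, by rw [subst_self, hfix τ (self_mem_sub τ)]⟩
      · exact ⟨y, ⟨hy, hyσ⟩, rfl⟩
    · refine ⟨x, ⟨hτsub hx, ?_⟩, hfix x hx⟩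
      intro hxs
      rw [Set.mem_singleton_iff] at hxs
      exact hστ (hxs ▸ hx)
  calc ATLsz (subst σ τ φ)
      ≤ ((subst σ τ) '' (ATLSub φ \ {σ})).ncard :=
        Set.ncard_le_ncard hsub ((hfin.diff).image _)
    _ ≤ (ATLSub φ \ {σ}).ncard := Set.ncard_image_le (hfin.diff)
    _ < (ATLSub φ).ncard := Set.ncard_diff_singleton_lt_of_mem hσ hfin
    _ = ATLsz φ := rfl

end ATLproofAux
namespace ATLproofAux

lemma card_vec (P : Type) (S : Finset (CGS P)) :
    Nat.card (∀ C : ↥S, Set (C : CGS P).Q) = 2 ^ (∑ C ∈ S, Fintype.card C.Q) := by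
  rw [Nat.card_pi]
  have h1 : ∀ C : ↥S, Nat.card (Set (C : CGS P).Q) = 2 ^ Fintype.card (C : CGS P).Q := by
    intro C; rw [Nat.card_eq_fintype_card, Fintype.card_set]
  calc (∏ C : ↥S, Nat.card (Set (C : CGS P).Q))
      = ∏ C : ↥S, 2 ^ Fintype.card (C : CGS P).Q := Finset.prod_congr rfl fun C _ => h1 C
    _ = 2 ^ (∑ C : ↥S, Fintype.card (C : CGS P).Q) :=
        Finset.prod_pow_eq_pow_sum Finset.univ _ 2
    _ = 2 ^ (∑ C ∈ S, Fintype.card C.Q) := by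
        congr 1
        exact Finset.sum_coe_sort S (fun C => Fintype.card C.Q)

lemma key (P : Type) (F : ATLFragment P) (Pos Neg : Finset (CGS P)) :
    ∀ (N : ℕ) (φ : ATL P), ATLsz φ ≤ N → F.Mem φ →
    (∀ C ∈ Pos, ATLsatC C φ) → (∀ C ∈ Neg, ¬ ATLsatC C φ) →
    ∃ φ' : ATL P, F.Mem φ' ∧ (∀ C ∈ Pos, ATLsatC C φ') ∧ (∀ C ∈ Neg, ¬ ATLsatC C φ') ∧
      ATLsz φ' ≤ 2 ^ (∑ C ∈ Pos ∪ Neg, Fintype.card C.Q) := by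
  intro N
  induction N with
  | zero =>
      intro φ h hm hp hn
      exact ⟨φ, hm, hp, hn, le_trans h (Nat.zero_le _)⟩
  | succ N ih =>
      intro φ hsz hm hp hn
      by_cases hle : ATLsz φ ≤ 2 ^ (∑ C ∈ Pos ∪ Neg, Fintype.card C.Q)
      · exact ⟨φ, hm, hp, hn, hle⟩
      push_neg at hle
      haveI : Fintype ↥(ATLSub φ) := (sub_finite φ).fintype
      let f : ↥(ATLSub φ) → ∀ C : ↥(Pos ∪ Neg), Set (C : CGS P).Q :=
        fun ψ C => {q | ATLsat (C : CGS P) (ψ : ATL P) q}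
      have hcard : Fintype.card (∀ C : ↥(Pos ∪ Neg), Set (C : CGS P).Q)
          < Fintype.card ↥(ATLSub φ) := by
        rw [← Nat.card_eq_fintype_card, ← Nat.card_eq_fintype_card, card_vec,
          Nat.card_coe_set_eq]
        exact hle
      obtain ⟨σ', τ', hne', hfeq⟩ := Fintype.exists_ne_map_eq_of_card_lt f hcard
      have heqv : ∀ C ∈ Pos ∪ Neg, ∀ q : C.Q, ATLsat C σ'.1 q ↔ ATLsat C τ'.1 q := by
        intro C hC q
        have h2 := Set.ext_iff.mp (congrFun hfeq ⟨C, hC⟩) q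
        simpa [f] using h2
      have main : ∀ σ τ : ATL P, σ ∈ ATLSub φ → τ ∈ ATLSub φ → σ ≠ τ → σ ∉ ATLSub τ →
          (∀ C ∈ Pos ∪ Neg, ∀ q : C.Q, ATLsat C σ q ↔ ATLsat C τ q) →
          ∃ φ' : ATL P, F.Mem φ' ∧ (∀ C ∈ Pos, ATLsatC C φ') ∧
            (∀ C ∈ Neg, ¬ ATLsatC C φ') ∧
            ATLsz φ' ≤ 2 ^ (∑ C ∈ Pos ∪ Neg, Fintype.card C.Q) := by
        intro σ τ hσ hτ hne hns heq
        have hsat : ∀ C ∈ Pos ∪ Neg, ∀ q : C.Q,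
            ATLsat C (subst σ τ φ) q ↔ ATLsat C φ q :=
          fun C hC q => sat_subst C (heq C hC) φ q
        refine ih (subst σ τ φ) ?_ (mem_subst (mem_of_sub hm hτ) hm) ?_ ?_
        · have := sz_subst_lt hσ hτ hne hns; omega
        · intro C hC q hq
          exact (hsat C (Finset.mem_union_left _ hC) q).mpr (hp C hC q hq)
        · intro C hC hsatC
          exact hn C hC fun q hq =>
            (hsat C (Finset.mem_union_right _ hC) q).mp (hsatC q hq)
      by_cases hin : σ'.1 ∈ ATLSub τ'.1
      · exact main τ'.1 σ'.1 τ'.2 σ'.2 (fun h => hne' (Subtype.ext h.symm))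
          (fun hc => hne' (Subtype.ext (sub_antisymm hin hc)))
          (fun C hC q => (heqv C hC q).symm)
      · exact main σ'.1 τ'.1 σ'.2 τ'.2 (fun h => hne' (Subtype.ext h)) hin heqv

end ATLproofAux

/-- **Corollary.** For any fragment of `ATL(Prop)` and any sample `(Pos, Neg)` of
concurrent game structures: if some fragment formula separates the sample, then
one of size at most `2^n` does, where `n` is the total number of states of the
sample. -/
theorem atl_separating_size (P : Type) [Finite P] (hP : Nonempty P)
    (F : ATLFragment P) (Pos Neg : Finset (CGS P)) :
    (∃ φ : ATL P, F.Mem φ ∧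
        (∀ C ∈ Pos, ATLsatC C φ) ∧ (∀ C ∈ Neg, ¬ ATLsatC C φ)) →
    ∃ φ : ATL P, F.Mem φ ∧
        (∀ C ∈ Pos, ATLsatC C φ) ∧ (∀ C ∈ Neg, ¬ ATLsatC C φ) ∧
        ATLsz φ ≤ 2 ^ (∑ C ∈ Pos ∪ Neg, Fintype.card C.Q) := by
  rintro ⟨φ, hm, hp, hn⟩
  exact ATLproofAux.key P F Pos Neg (ATLsz φ) φ le_rfl hm hp hn
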